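/- Let C ⊆ ℝⁿ be closed and let I ⊆ {1,…,n} be nonempty with π(C) unbounded. Then a vector v ∈ ℝⁿ belongs to the interior of the Clarke tangent cone T_C(∞_I) if and only if there exist constants ε > 0, R > 0, and λ > 0 such that x + t v' ∈ C for all x ∈ C with ‖π(x)‖ > R, all t ∈ [0, λ], and all v' in the closed ball B_ε(v) of radius ε around v. -/

import Mathlib

open Filter Topology Metric Set Bornology
open scoped InnerProductSpace Pointwise

noncomputable section

/-- Euclidean `n`-space. -/
abbrev En (n : ℕ) : Type := EuclideanSpace ℝ (Fin n)

/-- The Clarke tangent cone at infinity of `C ⊆ E`, where "going to infinity" is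
measured by `‖p x‖ → ∞` for a projection map `p`:  `v` belongs to the cone iff for all
sequences `x k ∈ C` with `‖p (x k)‖ → ∞` and all positive sequences `t k → 0` there is a
sequence `w k → v` with `x k + t k • w k ∈ C` for all `k`. -/
def tangentConeAtInfty {E F : Type*} [NormedAddCommGroup E] [NormedSpace ℝ E] [Norm F]
    (p : E → F) (C : Set E) : Set E :=
  {v | ∀ (x : ℕ → E) (t : ℕ → ℝ), (∀ k, x k ∈ C) →
      Tendsto (fun k => ‖p (x k)‖) atTop atTop →
      (∀ k, 0 < t k) → Tendsto t atTop (𝓝 0) →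
      ∃ w : ℕ → E, Tendsto w atTop (𝓝 v) ∧ ∀ k, x k + t k • w k ∈ C}

/-- Projection of `ℝⁿ` onto the coordinates indexed by `I`. -/
def proj {n : ℕ} (I : Finset (Fin n)) (x : En n) : EuclideanSpace ℝ ↥I := WithLp.toLp 2 (fun i => x i)

lemma proj_sub {n : ℕ} (I : Finset (Fin n)) (a b : En n) :
    proj I (a - b) = proj I a - proj I b := by ext i; simp [proj]

lemma norm_proj_le {n : ℕ} (I : Finset (Fin n)) (x : En n) : ‖proj I x‖ ≤ ‖x‖ := by
  rw [EuclideanSpace.norm_eq, EuclideanSpace.norm_eq]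
  apply Real.sqrt_le_sqrt
  calc ∑ i : ↥I, ‖proj I x i‖ ^ 2 = ∑ i ∈ I, ‖x i‖ ^ 2 := by
        rw [← Finset.sum_coe_sort I (fun i => ‖x i‖ ^ 2)]; rfl
    _ ≤ ∑ i : Fin n, ‖x i‖ ^ 2 :=
        Finset.sum_le_sum_of_subset_of_nonneg (Finset.subset_univ I)
          (fun i _ _ => by positivity)

lemma norm_proj_sub_le {n : ℕ} (I : Finset (Fin n)) (a b : En n) :
    ‖proj I a‖ - ‖proj I b‖ ≤ ‖a - b‖ := by
  have h := norm_sub_norm_le (proj I a) (proj I b)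
  rw [← proj_sub] at h
  exact h.trans (norm_proj_le I _)

/-- Recursive construction of a sequence satisfying an inductive invariant. -/
lemma exists_invariant_seq {α : Type*} (P : ℕ → α → Prop) (a : α) (h0 : P 0 a)
    (hstep : ∀ j y, P j y → ∃ z, P (j + 1) z) :
    ∃ g : ℕ → α, ∀ j, P j (g j) := by
  choose! f hf using hstep
  refine ⟨fun j => Nat.rec a f j, fun j => ?_⟩
  induction j with
  | zero => exact h0
  | succ j ih => exact hf j _ ih

/-- Uniform approximate reachability over a compact ball of directions inside the cone. -/
lemma unif_approx {n : ℕ} (C : Set (En n)) (I : Finset (Fin n)) (v : En n) (r δ : ℝ)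
    (hδ : 0 < δ) (hsub : closedBall v r ⊆ tangentConeAtInfty (proj I) C) :
    ∃ R : ℝ, 0 < R ∧ ∃ lam : ℝ, 0 < lam ∧ ∀ x ∈ C, R < ‖proj I x‖ →
      ∀ s : ℝ, 0 < s → s ≤ lam → ∀ u ∈ closedBall v r, infDist (x + s • u) C ≤ δ * s := by
  by_contra h
  push_neg at h
  have h' : ∀ k : ℕ, ∃ x, x ∈ C ∧ (k : ℝ) < ‖proj I x‖ ∧
      ∃ s : ℝ, 0 < s ∧ s ≤ 1 / ((k : ℝ) + 1) ∧ ∃ u, u ∈ closedBall v r ∧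
        δ * s < infDist (x + s • u) C := by
    intro k
    obtain ⟨x, hxC, hxn, s, hs0, hslam, u, huB, hfar⟩ :=
      h ((k : ℝ) + 1) (by positivity) (1 / ((k : ℝ) + 1)) (by positivity)
    exact ⟨x, hxC, by linarith, s, hs0, hslam, u, huB, hfar⟩
  choose x hxC hxn s hs0 hslam u huB hfar using h'
  obtain ⟨u₀, hu₀, φ, hφ, hconv⟩ := (isCompact_closedBall v r).tendsto_subseq huB
  have hφk : ∀ k : ℕ, (k : ℝ) ≤ (φ k : ℝ) := fun k => Nat.cast_le.mpr hφ.le_apply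
  have hnormtop : Tendsto (fun k => ‖proj I (x (φ k))‖) atTop atTop := by
    apply tendsto_atTop_mono (fun k => le_of_lt (lt_of_le_of_lt (hφk k) (hxn (φ k))))
    exact tendsto_natCast_atTop_atTop
  have hsbound : ∀ k : ℕ, s (φ k) ≤ 1 / ((k : ℝ) + 1) := by
    intro k
    refine le_trans (hslam (φ k)) ?_
    apply one_div_le_one_div_of_le (by positivity)
    linarith [hφk k]
  have hstop : Tendsto (fun k => s (φ k)) atTop (𝓝 0) :=
    squeeze_zero (fun k => (hs0 (φ k)).le) hsbound
      tendsto_one_div_add_atTop_nhds_zero_nat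
  obtain ⟨w, hwconv, hwC⟩ := hsub hu₀ (fun k => x (φ k)) (fun k => s (φ k))
    (fun k => hxC (φ k)) hnormtop (fun k => hs0 (φ k)) hstop
  have hdiff : Tendsto (fun k => ‖u (φ k) - w k‖) atTop (𝓝 0) := by
    have := (hconv.sub hwconv).norm
    simpa using this
  obtain ⟨k, hk⟩ := (hdiff.eventually_lt_const hδ).exists
  have h1 : infDist (x (φ k) + s (φ k) • u (φ k)) C ≤
      dist (x (φ k) + s (φ k) • u (φ k)) (x (φ k) + s (φ k) • w k) :=
    infDist_le_dist_of_mem (hwC k)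
  have h2 : dist (x (φ k) + s (φ k) • u (φ k)) (x (φ k) + s (φ k) • w k)
      = s (φ k) * ‖u (φ k) - w k‖ := by
    rw [dist_eq_norm]
    have heq : x (φ k) + s (φ k) • u (φ k) - (x (φ k) + s (φ k) • w k)
        = s (φ k) • (u (φ k) - w k) := by module
    rw [heq, norm_smul, Real.norm_eq_abs, abs_of_pos (hs0 (φ k))]
  have h3 := hfar (φ k)
  have h4 : s (φ k) * ‖u (φ k) - w k‖ < δ * s (φ k) := by
    have := mul_lt_mul_of_pos_left hk (hs0 (φ k))
    linarith
  rw [h2] at h1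
  linarith

set_option maxHeartbeats 2000000 in
/-- Theorem 3.6: characterization of the interior of the Clarke tangent cone at
infinity of a closed set. -/
theorem stmt2 (n : ℕ) (C : Set (En n)) (I : Finset (Fin n)) (hI : I.Nonempty)
    (hC : IsClosed C) (hunb : ¬ IsBounded (proj I '' C)) (v : En n) :
    v ∈ interior (tangentConeAtInfty (proj I) C) ↔
      ∃ ε : ℝ, 0 < ε ∧ ∃ R : ℝ, 0 < R ∧ ∃ lam : ℝ, 0 < lam ∧
        ∀ x ∈ C, R < ‖proj I x‖ → ∀ t ∈ Icc (0:ℝ) lam, ∀ v' ∈ closedBall v ε,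
          x + t • v' ∈ C := by
  constructor
  · -- hard direction
    intro hv
    obtain ⟨ε₀, hε₀, hball⟩ := Metric.mem_nhds_iff.mp (mem_interior_iff_mem_nhds.mp hv)
    set ε : ℝ := ε₀ / 4 with hε_def
    have hεpos : 0 < ε := by positivity
    have hsub : closedBall v (2 * ε) ⊆ tangentConeAtInfty (proj I) C := by
      refine subset_trans (closedBall_subset_ball ?_) hball
      rw [hε_def]; linarith
    obtain ⟨R₀, hR₀, lam₀, hlam₀, happrox⟩ :=
      unif_approx C I v (2 * ε) (ε / 2) (by positivity) hsub
    have hden : 0 < ‖v‖ + 2 * ε := by positivity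
    refine ⟨ε, hεpos, R₀ + 1, by positivity, min lam₀ (1 / (‖v‖ + 2 * ε)),
      lt_min hlam₀ (by positivity), ?_⟩
    intro x hx hxR t ht v' hv'
    rcases eq_or_lt_of_le ht.1 with h0 | htpos
    · rw [← h0, zero_smul, add_zero]; exact hx
    have htlam₀ : t ≤ lam₀ := le_trans ht.2 (min_le_left _ _)
    have htv : t * (‖v‖ + 2 * ε) ≤ 1 := by
      have h5 : t ≤ 1 / (‖v‖ + 2 * ε) := le_trans ht.2 (min_le_right _ _)
      rw [le_div_iff₀ hden] at h5
      linarith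
    have hv'norm : ‖v'‖ ≤ ‖v‖ + ε := by
      have h6 : ‖v' - v‖ ≤ ε := mem_closedBall_iff_norm.mp hv'
      have := norm_sub_norm_le v' v
      linarith
    -- the chasing sequence
    set ζ : ℕ → En n := fun j => x + (t - t * (1/2) ^ j) • v' with hζ_def
    have key : ∀ j, ∀ y : En n, (y ∈ C ∧ ‖y - ζ j‖ ≤ ε / 2 * t * (1/2) ^ j) →
        ∃ z : En n, z ∈ C ∧ ‖z - ζ (j+1)‖ ≤ ε / 2 * t * (1/2) ^ (j+1) := by
      intro j y ⟨hyC, hy⟩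
      have hpj : (0:ℝ) < (1/2) ^ j := by positivity
      have hpj1 : ((1:ℝ)/2) ^ j ≤ 1 := pow_le_one₀ (by norm_num) (by norm_num)
      set Δ : ℝ := t * (1/2) ^ (j+1) with hΔ
      have hΔpos : 0 < Δ := by positivity
      set u : En n := Δ⁻¹ • (ζ (j+1) - y) with hu
      have hstepto : y + Δ • u = ζ (j+1) := by
        rw [hu, smul_inv_smul₀ hΔpos.ne']; abel
      have hζdiff : ζ (j+1) - ζ j = Δ • v' := by
        simp only [hζ_def]
        have hsc : t - t * (1/2) ^ (j+1) = (t - t * (1/2) ^ j) + Δ := by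
          rw [hΔ]; ring
        rw [hsc]
        module
      have huv' : u - v' = Δ⁻¹ • (ζ j - y) := by
        rw [hu, show ζ (j+1) - y = Δ • v' + (ζ j - y) by rw [← hζdiff]; abel,
          smul_add, inv_smul_smul₀ hΔpos.ne']
        abel
      have h1 : ‖u - v'‖ ≤ ε := by
        rw [huv', norm_smul, Real.norm_eq_abs, abs_of_pos (inv_pos.mpr hΔpos)]
        have hyn : ‖ζ j - y‖ ≤ ε / 2 * t * (1/2) ^ j := by
          rw [norm_sub_rev]; exact hy
        calc Δ⁻¹ * ‖ζ j - y‖ ≤ Δ⁻¹ * (ε / 2 * t * (1/2) ^ j) :=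
              mul_le_mul_of_nonneg_left hyn (inv_nonneg.mpr hΔpos.le)
          _ = ε := by
              rw [hΔ, pow_succ]
              have ht0 : t ≠ 0 := htpos.ne'
              have hpj0 : ((1:ℝ)/2) ^ j ≠ 0 := hpj.ne'
              field_simp
      have hunorm : u ∈ closedBall v (2 * ε) := by
        rw [mem_closedBall_iff_norm]
        have h7 : ‖v' - v‖ ≤ ε := mem_closedBall_iff_norm.mp hv'
        calc ‖u - v‖ = ‖(u - v') + (v' - v)‖ := by rw [sub_add_sub_cancel]
          _ ≤ ‖u - v'‖ + ‖v' - v‖ := norm_add_le _ _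
          _ ≤ 2 * ε := by linarith
      have hζjx : ‖ζ j - x‖ ≤ t * (‖v‖ + ε) := by
        have heq : ζ j - x = (t - t * (1/2) ^ j) • v' := by
          simp only [hζ_def]; module
        have hnn : (0:ℝ) ≤ t - t * (1/2) ^ j := by nlinarith
        rw [heq, norm_smul, Real.norm_eq_abs, abs_of_nonneg hnn]
        calc (t - t * (1/2) ^ j) * ‖v'‖ ≤ t * ‖v'‖ :=
              mul_le_mul_of_nonneg_right (by nlinarith) (norm_nonneg _)
          _ ≤ t * (‖v‖ + ε) := mul_le_mul_of_nonneg_left hv'norm htpos.le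
      have hyx : ‖y - x‖ ≤ 1 := by
        have h8 : ‖y - x‖ ≤ ‖y - ζ j‖ + ‖ζ j - x‖ := by
          rw [show y - x = (y - ζ j) + (ζ j - x) by abel]
          exact norm_add_le _ _
        have h9 : ε / 2 * t * (1/2) ^ j ≤ ε / 2 * t :=
          mul_le_of_le_one_right (by positivity) hpj1
        nlinarith
      have hynorm : R₀ < ‖proj I y‖ := by
        have h10 : ‖proj I x‖ - ‖proj I y‖ ≤ ‖x - y‖ := norm_proj_sub_le I x y
        have h11 : ‖x - y‖ = ‖y - x‖ := norm_sub_rev _ _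
        linarith
      have hΔlam : Δ ≤ lam₀ := by
        have hΔt : Δ ≤ t := by
          rw [hΔ]
          exact mul_le_of_le_one_right htpos.le (pow_le_one₀ (by norm_num) (by norm_num))
        linarith
      have happ := happrox y hyC hynorm Δ hΔpos hΔlam u hunorm
      rw [hstepto] at happ
      obtain ⟨z, hzC, hzdist⟩ := hC.exists_infDist_eq_dist ⟨x, hx⟩ (ζ (j+1))
      refine ⟨z, hzC, ?_⟩
      rw [norm_sub_rev, ← dist_eq_norm, ← hzdist]
      calc infDist (ζ (j+1)) C ≤ ε / 2 * Δ := happ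
        _ = ε / 2 * t * (1/2) ^ (j+1) := by rw [hΔ]; ring
    have h00 : x ∈ C ∧ ‖x - ζ 0‖ ≤ ε / 2 * t * (1/2) ^ 0 := by
      refine ⟨hx, ?_⟩
      have hζ0 : ζ 0 = x := by simp [hζ_def]
      rw [hζ0]
      simp only [sub_self, norm_zero, pow_zero, mul_one]
      positivity
    obtain ⟨g, hg⟩ := exists_invariant_seq
      (fun j y => y ∈ C ∧ ‖y - ζ j‖ ≤ ε / 2 * t * (1/2) ^ j) x h00 key
    have hlim : Tendsto g atTop (𝓝 (x + t • v')) := by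
      rw [tendsto_iff_norm_sub_tendsto_zero]
      apply squeeze_zero (fun j => norm_nonneg _)
        (g := fun j => (ε / 2 * t + t * ‖v'‖) * (1/2) ^ j)
      · intro j
        have h12 : ‖ζ j - (x + t • v')‖ = t * (1/2) ^ j * ‖v'‖ := by
          have heq : ζ j - (x + t • v') = (-(t * (1/2) ^ j)) • v' := by
            simp only [hζ_def]; module
          rw [heq, norm_smul, Real.norm_eq_abs, abs_neg,
            abs_of_pos (by positivity : (0:ℝ) < t * (1/2) ^ j)]
        calc ‖g j - (x + t • v')‖ ≤ ‖g j - ζ j‖ + ‖ζ j - (x + t • v')‖ := by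
              rw [show g j - (x + t • v') = (g j - ζ j) + (ζ j - (x + t • v')) by abel]
              exact norm_add_le _ _
          _ ≤ ε / 2 * t * (1/2) ^ j + t * (1/2) ^ j * ‖v'‖ := by
              rw [h12]; exact add_le_add_left (hg j).2 _
          _ = (ε / 2 * t + t * ‖v'‖) * (1/2) ^ j := by ring
      · have := (tendsto_pow_atTop_nhds_zero_of_lt_one
          (by norm_num : (0:ℝ) ≤ 1/2) (by norm_num : (1:ℝ)/2 < 1)).const_mul
          (ε / 2 * t + t * ‖v'‖)
        simpa using this
    exact hC.mem_of_tendsto hlim (Eventually.of_forall fun j => (hg j).1)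
  · -- easy direction
    rintro ⟨ε, hε, R, hR, lam, hlam, hprop⟩
    apply mem_interior.mpr
    refine ⟨ball v ε, ?_, isOpen_ball, mem_ball_self hε⟩
    intro v' hv' xs ts hxsC hxsnorm hts0 htslim
    have h1 : ∀ᶠ k in atTop, R < ‖proj I (xs k)‖ := hxsnorm.eventually_gt_atTop R
    have h2 : ∀ᶠ k in atTop, ts k < lam := htslim.eventually_lt_const hlam
    obtain ⟨N, hN⟩ := eventually_atTop.mp (h1.and h2)
    refine ⟨fun k => if k < N then 0 else v', ?_, ?_⟩
    · apply Tendsto.congr' ?_ (tendsto_const_nhds (x := v'))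
      filter_upwards [eventually_ge_atTop N] with k hk
      simp [Nat.not_lt.mpr hk]
    · intro k
      by_cases hk : k < N
      · simp only [if_pos hk, smul_zero, add_zero]
        exact hxsC k
      · simp only [if_neg hk]
        push_neg at hk
        obtain ⟨hR', hlam'⟩ := hN k hk
        exact hprop (xs k) (hxsC k) hR' (ts k) ⟨(hts0 k).le, hlam'.le⟩ v'
          (ball_subset_closedBall hv')
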